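/- Let F : X → 2^X be an upper semicontinuous set-valued map on a compact Hausdorff space X. Then the following are equivalent: (i) F is expansive; (ii) F has a generator; (iii) F has a weak generator. -/

import Mathlib

open Set Filter Metric Topology

section Defs

variable {X : Type*} [TopologicalSpace X]

/-- A finite open cover of `X`. -/
def IsFOC (U : Set (Set X)) : Prop :=
  U.Finite ∧ (∀ V ∈ U, IsOpen V) ∧ ⋃₀ U = Set.univ

/-- Upper semicontinuity for set-valued maps. -/
def USCSV (F : X → Set X) : Prop :=
  ∀ x : X, ∀ U : Set X, IsOpen U → F x ⊆ U →
    ∃ V : Set X, IsOpen V ∧ x ∈ V ∧ ∀ y ∈ V, F y ⊆ U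

/-- Lower semicontinuity for set-valued maps. -/
def LSCSV (F : X → Set X) : Prop :=
  ∀ x : X, ∀ U : Set X, IsOpen U → (F x ∩ U).Nonempty →
    ∃ V : Set X, IsOpen V ∧ x ∈ V ∧ ∀ y ∈ V, (F y ∩ U).Nonempty

/-- An `F`-orbit. -/
def IsSVOrbit (F : X → Set X) (z : ℕ → X) : Prop := ∀ i, z (i + 1) ∈ F (z i)

/-- The orbit space of a set-valued system. -/
def svOrbitSet (F : X → Set X) : Set (ℕ → X) := {w | ∀ i, w (i + 1) ∈ F (w i)}

/-- A `𝒱`-pseudo-orbit of the set-valued map `F`. -/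
def IsSVPseudoOrbit (F : X → Set X) (V : Set (Set X)) (x : ℕ → X) : Prop :=
  ∀ i, ∃ W ∈ V, (F (x i) ∩ W).Nonempty ∧ x (i + 1) ∈ W

/-- `x` is `𝒰`-shadowed by `z`. -/
def ShadowedBy (U : Set (Set X)) (x z : ℕ → X) : Prop :=
  ∀ i, ∃ W ∈ U, x i ∈ W ∧ z i ∈ W

/-- The set-valued shadowing property (finite open cover version). -/
def SVShadowing (F : X → Set X) : Prop :=
  ∀ U : Set (Set X), IsFOC U → ∃ V : Set (Set X), IsFOC V ∧
    ∀ x : ℕ → X, IsSVPseudoOrbit F V x →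
      ∃ z : ℕ → X, IsSVOrbit F z ∧ ShadowedBy U x z

/-- Inverse image of a set under a set-valued map: `F⁻¹(A) = {x | F x ∩ A ≠ ∅}`. -/
def Finv (F : X → Set X) (A : Set X) : Set X := {x | (F x ∩ A).Nonempty}

/-- The `n`-tuple orbital discriminant `[U_0, …, U_n]`. -/
def tupleDisc (F : X → Set X) : ℕ → (ℕ → Set X) → Set X
  | 0, U => U 0
  | n + 1, U => U 0 ∩ Finv F (tupleDisc F n fun i => U (i + 1))

/-- The orbital discriminant `[U_i] = ⋂ₙ [U_0, …, U_n]`. -/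
def seqDisc (F : X → Set X) (U : ℕ → Set X) : Set X := ⋂ n, tupleDisc F n U

end Defs

/-- A generator for a set-valued map. -/
def IsGenerator {X : Type*} [TopologicalSpace X] (F : X → Set X) (U : Set (Set X)) : Prop :=
  IsFOC U ∧ ∀ Us : ℕ → Set X, (∀ i, Us i ∈ U) →
    (seqDisc F fun i => closure (Us i)).Subsingleton

/-- A weak generator for a set-valued map. -/
def IsWeakGenerator {X : Type*} [TopologicalSpace X] (F : X → Set X) (U : Set (Set X)) : Prop :=
  IsFOC U ∧ ∀ Us : ℕ → Set X, (∀ i, Us i ∈ U) → (seqDisc F Us).Subsingleton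

/-- Expansiveness of a set-valued map with respect to the uniformity. -/
def ExpansiveSV {X : Type*} [UniformSpace X] (F : X → Set X) : Prop :=
  ∃ δ ∈ uniformity X, ∀ x y : ℕ → X, IsSVOrbit F x → IsSVOrbit F y →
    (∀ i, (x i, y i) ∈ δ) → x 0 = y 0


section Aux

open UniformSpace

variable {X : Type*} [TopologicalSpace X] {F : X → Set X}

lemma tupleDisc_mono {U V : ℕ → Set X} (h : ∀ i, U i ⊆ V i) :
    ∀ n, tupleDisc F n U ⊆ tupleDisc F n V := by
  intro n
  induction n generalizing U V with
  | zero => exact h 0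
  | succ n ih =>
    rintro a ⟨ha0, b, hbF, hbT⟩
    exact ⟨h 0 ha0, b, hbF, ih (fun i => h (i + 1)) hbT⟩

/-- Prepend a point to a sequence. -/
def consSeq (a : X) (w : ℕ → X) : ℕ → X
  | 0 => a
  | n + 1 => w n

lemma exists_orbit_from (hFne : ∀ x, (F x).Nonempty) (a : X) :
    ∃ w : ℕ → X, IsSVOrbit F w ∧ w 0 = a :=
  ⟨fun n => Nat.rec a (fun _ p => (hFne p).choose) n,
    fun _ => (hFne _).choose_spec, rfl⟩

lemma exists_orbit_of_mem_tupleDisc (hFne : ∀ x, (F x).Nonempty) :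
    ∀ (n : ℕ) (U : ℕ → Set X) (a : X), a ∈ tupleDisc F n U →
      ∃ w : ℕ → X, IsSVOrbit F w ∧ w 0 = a ∧ ∀ i ≤ n, w i ∈ U i := by
  intro n
  induction n with
  | zero =>
    intro U a ha
    obtain ⟨w, hw, hw0⟩ := exists_orbit_from hFne a
    refine ⟨w, hw, hw0, fun i hi => ?_⟩
    obtain rfl := Nat.le_zero.mp hi
    rw [hw0]; exact ha
  | succ n ih =>
    rintro U a ⟨ha0, b, hbF, hbT⟩
    obtain ⟨w, hw, hw0, hwU⟩ := ih (fun i => U (i + 1)) b hbT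
    refine ⟨consSeq a w, fun i => ?_, rfl, fun i hi => ?_⟩
    · cases i with
      | zero => show w 0 ∈ F a; rw [hw0]; exact hbF
      | succ k => exact hw k
    · cases i with
      | zero => exact ha0
      | succ k => exact hwU k (Nat.succ_le_succ_iff.mp hi)

lemma orbit_mem_tupleDisc :
    ∀ (n : ℕ) (U : ℕ → Set X) (w : ℕ → X), IsSVOrbit F w →
      (∀ i, w i ∈ U i) → w 0 ∈ tupleDisc F n U := by
  intro n
  induction n with
  | zero => intro U w _ h; exact h 0
  | succ n ih =>
    intro U w hw h
    exact ⟨h 0, w 1, hw 0,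
      ih (fun i => U (i + 1)) (fun i => w (i + 1)) (fun i => hw (i + 1)) fun i => h (i + 1)⟩

lemma isClosed_graph_of_usc [T2Space X] (hFcpt : ∀ x, IsCompact (F x)) (hFusc : USCSV F) :
    IsClosed {p : X × X | p.2 ∈ F p.1} := by
  rw [← isOpen_compl_iff, isOpen_iff_mem_nhds]
  rintro ⟨x, y⟩ hxy
  obtain ⟨U, W, hU, hW, hFU, hyW, hUW⟩ :=
    SeparatedNhds.of_isCompact_isCompact (hFcpt x) isCompact_singleton
      (disjoint_singleton_right.mpr hxy)
  obtain ⟨V, hV, hxV, hFV⟩ := hFusc x U hU hFU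
  refine mem_of_superset ((hV.prod hW).mem_nhds ⟨hxV, hyW (mem_singleton y)⟩) ?_
  rintro ⟨a, b⟩ ⟨haV, hbW⟩ hmem
  exact Set.disjoint_left.mp hUW (hFV a haV hmem) hbW

lemma isClosed_svOrbitSet [T2Space X] (hFcpt : ∀ x, IsCompact (F x)) (hFusc : USCSV F) :
    IsClosed (svOrbitSet F) := by
  have hg := isClosed_graph_of_usc hFcpt hFusc
  have : svOrbitSet F =
      ⋂ n, (fun w : ℕ → X => (w n, w (n + 1))) ⁻¹' {p : X × X | p.2 ∈ F p.1} := by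
    ext w; simp [svOrbitSet]
  rw [this]
  exact isClosed_iInter fun n =>
    hg.preimage ((continuous_apply n).prodMk (continuous_apply (n + 1)))

lemma exists_orbit_in_closed [T2Space X] [CompactSpace X]
    (hFne : ∀ x, (F x).Nonempty) (hFcpt : ∀ x, IsCompact (F x)) (hFusc : USCSV F)
    {C : ℕ → Set X} (hC : ∀ i, IsClosed (C i)) {a : X}
    (ha : ∀ n, a ∈ tupleDisc F n C) :
    ∃ w : ℕ → X, IsSVOrbit F w ∧ w 0 = a ∧ ∀ i, w i ∈ C i := by
  set S : ℕ → Set (ℕ → X) := fun n =>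
    svOrbitSet F ∩ ((fun w : ℕ → X => w 0) ⁻¹' {a}) ∩
      ⋂ i, ⋂ (_ : i ≤ n), (fun w : ℕ → X => w i) ⁻¹' C i with hS
  have hclosed : ∀ n, IsClosed (S n) := fun n =>
    (((isClosed_svOrbitSet hFcpt hFusc).inter
        (isClosed_singleton.preimage (continuous_apply 0))).inter
      (isClosed_iInter fun i => isClosed_iInter fun _ => (hC i).preimage (continuous_apply i)))
  have hne : ∀ n, (S n).Nonempty := by
    intro n
    obtain ⟨w, hw, hw0, hwC⟩ := exists_orbit_of_mem_tupleDisc hFne n C a (ha n)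
    exact ⟨w, ⟨hw, hw0⟩, mem_iInter.mpr fun i => mem_iInter.mpr fun hi => hwC i hi⟩
  have hdec : ∀ n, S (n + 1) ⊆ S n := by
    rintro n w ⟨hw1, hw2⟩
    exact ⟨hw1, mem_iInter.mpr fun i => mem_iInter.mpr fun hi =>
      mem_iInter.mp (mem_iInter.mp hw2 i) (hi.trans (Nat.le_succ n))⟩
  obtain ⟨w, hw⟩ := IsCompact.nonempty_iInter_of_sequence_nonempty_isCompact_isClosed S hdec hne
    ((hclosed 0).isCompact) hclosed
  have hmem : ∀ n, w ∈ S n := fun n => mem_iInter.mp hw n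
  refine ⟨w, (hmem 0).1.1, (hmem 0).1.2, fun i => ?_⟩
  exact mem_iInter.mp (mem_iInter.mp (hmem i).2 i) le_rfl

lemma mem_closure_ball {Y : Type*} [UniformSpace Y] {t : Set (Y × Y)} (ht : t ∈ uniformity Y)
    (hsymm : SetRel.IsSymm t) {c p : Y} (hp : p ∈ closure (ball c t)) : (c, p) ∈ SetRel.comp t t := by
  obtain ⟨z, hz1, hz2⟩ := mem_closure_iff_nhds.mp hp _ (UniformSpace.ball_mem_nhds p ht)
  exact ⟨z, hz2, hsymm.symm _ _ hz1⟩

end Aux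

/-- Theorem 3.16: on a compact Hausdorff space, an usc set-valued map is
expansive iff it has a generator iff it has a weak generator. -/
theorem expansiveSV_iff_generator_iff_weakGenerator
    {X : Type*} [UniformSpace X] [CompactSpace X] [T2Space X]
    (F : X → Set X)
    (hFne : ∀ x, (F x).Nonempty) (hFcpt : ∀ x, IsCompact (F x)) (hFusc : USCSV F) :
    (ExpansiveSV F ↔ ∃ U : Set (Set X), IsGenerator F U) ∧
    ((∃ U : Set (Set X), IsGenerator F U) ↔ ∃ U : Set (Set X), IsWeakGenerator F U) := by
  classical
  have hEG : ExpansiveSV F → ∃ U : Set (Set X), IsGenerator F U := by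
    rintro ⟨δ, hδ, hexp⟩
    obtain ⟨s, hs, hssymm, hss⟩ := comp_symm_mem_uniformity_sets hδ
    obtain ⟨t, ht, htsymm, htt⟩ := comp_symm_mem_uniformity_sets hs
    have hti : interior t ∈ uniformity X := interior_mem_uniformity ht
    obtain ⟨T, hT⟩ := isCompact_univ.elim_finite_subcover
      (fun x : X => UniformSpace.ball x (interior t))
      (fun x => UniformSpace.isOpen_ball x isOpen_interior)
      (fun x _ => Set.mem_iUnion.mpr ⟨x, UniformSpace.mem_ball_self x hti⟩)
    refine ⟨(fun x => UniformSpace.ball x (interior t)) '' ↑T,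
      ⟨⟨T.finite_toSet.image _, ?_, ?_⟩, ?_⟩⟩
    · rintro V ⟨x, -, rfl⟩
      exact UniformSpace.isOpen_ball x isOpen_interior
    · apply Set.eq_univ_of_univ_subset
      rw [Set.sUnion_image]
      exact hT
    · intro Us hUs a ha b hb
      choose c hcT hc using hUs
      have hclos : ∀ i, IsClosed (closure (Us i)) := fun i => isClosed_closure
      have ha' : ∀ n, a ∈ tupleDisc F n fun i => closure (Us i) := fun n =>
        Set.mem_iInter.mp ha n
      have hb' : ∀ n, b ∈ tupleDisc F n fun i => closure (Us i) := fun n =>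
        Set.mem_iInter.mp hb n
      obtain ⟨x, hxorb, hx0, hxC⟩ := exists_orbit_in_closed hFne hFcpt hFusc hclos ha'
      obtain ⟨y, hyorb, hy0, hyC⟩ := exists_orbit_in_closed hFne hFcpt hFusc hclos hb'
      have hkey : ∀ (p : X) (i : ℕ), p ∈ closure (Us i) → (c i, p) ∈ s := by
        intro p i hp
        have : p ∈ closure (UniformSpace.ball (c i) t) := by
          refine closure_mono ?_ hp
          intro z hz
          rw [← hc i] at hz
          show (c i, z) ∈ t
          exact interior_subset (show (c i, z) ∈ interior t from hz)
        exact htt (mem_closure_ball ht htsymm this)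
      have hδi : ∀ i, (x i, y i) ∈ δ := by
        intro i
        exact hss ⟨c i, hssymm.symm _ _ (hkey _ i (hxC i)), hkey _ i (hyC i)⟩
      have := hexp x y hxorb hyorb hδi
      rw [hx0, hy0] at this
      exact this
  have hGW : (∃ U : Set (Set X), IsGenerator F U) →
      ∃ U : Set (Set X), IsWeakGenerator F U := by
    rintro ⟨U, hFOC, hgen⟩
    refine ⟨U, hFOC, fun Us hUs => (hgen Us hUs).anti ?_⟩
    exact Set.iInter_mono fun n => tupleDisc_mono (fun i => subset_closure) n
  have hWE : (∃ U : Set (Set X), IsWeakGenerator F U) → ExpansiveSV F := by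
    rintro ⟨U, ⟨hUfin, hUopen, hUcover⟩, hweak⟩
    obtain ⟨V, hV, hVle⟩ := lebesgue_number_lemma (U := fun W : U => (W : Set X))
      isCompact_univ (fun W => hUopen W W.2)
      (by rw [← Set.sUnion_eq_iUnion, hUcover])
    refine ⟨V, hV, fun x y hx hy hxy => ?_⟩
    have hW : ∀ i, ∃ W : U, UniformSpace.ball (x i) V ⊆ (W : Set X) :=
      fun i => hVle (x i) (Set.mem_univ _)
    choose W hWsub using hW
    have hxW : ∀ i, x i ∈ (W i : Set X) :=
      fun i => hWsub i (UniformSpace.mem_ball_self _ hV)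
    have hyW : ∀ i, y i ∈ (W i : Set X) := fun i => hWsub i (hxy i)
    have hsub := hweak (fun i => (W i : Set X)) (fun i => (W i).2)
    exact hsub (Set.mem_iInter.mpr fun n => orbit_mem_tupleDisc n _ x hx hxW)
      (Set.mem_iInter.mpr fun n => orbit_mem_tupleDisc n _ y hy hyW)
  exact ⟨⟨hEG, fun h => hWE (hGW h)⟩, ⟨hGW, fun h => hEG (hWE h)⟩⟩
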